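/- Let X be a zero-dimensional compact metric space and let G ⊆ X be a G_δ set. Then there exist a compact metric space Y and a continuous surjection φ : X → Y such that the restriction of φ to G is a homeomorphism of G onto φ(G), φ(X \ G) ∩ φ(G) = ∅, and the set Y \ φ(G) is countable. -/

import Mathlib

open Cardinal

open Classical in
/-- The "atom" of the first `n` sets of the family `B` containing `x`. -/
def stmt8S {X : Type} (B : ℕ → Set X) (x : X) (n : ℕ) : Set X :=
  {y | ∀ i < n, (y ∈ B i ↔ x ∈ B i)}

open Classical in
/-- The largest `m ≤ n` such that the `n`-atom of `x` is contained in `U m`. -/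
noncomputable def stmt8ell {X : Type} (B U : ℕ → Set X) (x : X) (n : ℕ) : ℕ :=
  Nat.findGreatest (fun m => stmt8S B x n ⊆ U m) n

open Classical in
/-- The coding map. -/
noncomputable def stmt8phi {X : Type} (B U : ℕ → Set X) (x : X) (n : ℕ) : ℕ :=
  Nat.pair (stmt8ell B U x n)
    (Encodable.encode ((Finset.range (stmt8ell B U x n)).filter (fun i => x ∈ B i)))

/-- For every G_δ set `G` in a zero-dimensional compact metric space `X` there exist a
compact metric space `Y` and a continuous surjection `φ : X → Y` restricting to a
homeomorphism on `G`, with `φ(X \ G) ∩ φ(G) = ∅` and `Y \ φ(G)` countable. -/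
theorem stmt_8 (X : Type) [MetricSpace X] [CompactSpace X]
    (hzerodim : ∃ B : Set (Set X), (∀ s ∈ B, IsClopen s) ∧
      TopologicalSpace.IsTopologicalBasis B)
    (G : Set X) (hGδ : IsGδ G) :
    ∃ (Y : Type) (_ : MetricSpace Y) (_ : CompactSpace Y) (φ : X → Y),
      Continuous φ ∧ Function.Surjective φ ∧
      Topology.IsEmbedding (fun x : G => φ x) ∧
      φ '' Gᶜ ∩ φ '' G = ∅ ∧
      Set.Countable (φ '' G)ᶜ := by
  classical
  obtain ⟨B0, hB0clopen, hB0basis⟩ := hzerodim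
  -- The family of all clopen subsets of `X` is countable.
  have hclopen_ctble : {K : Set X | IsClopen K}.Countable := by
    obtain ⟨C, hCc, -, hCb⟩ := TopologicalSpace.exists_countable_basis X
    have hsub : {K : Set X | IsClopen K} ⊆
        (fun F : Set (Set X) => ⋃₀ F) '' {F | F.Finite ∧ F ⊆ C} := by
      intro K hK
      obtain ⟨S, hSC, hKS⟩ := hCb.open_eq_sUnion hK.2
      have hKcomp : IsCompact K := hK.1.isCompact
      have hcover : K ⊆ ⋃ i ∈ S, i := by rw [hKS]; simp [Set.sUnion_eq_biUnion]
      obtain ⟨S', hS'S, hS'fin, hKS'⟩ := hKcomp.elim_finite_subcover_image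
        (fun i hi => hCb.isOpen (hSC hi)) hcover
      refine ⟨S', ⟨hS'fin, hS'S.trans hSC⟩, ?_⟩
      apply Set.Subset.antisymm
      · intro y hy
        obtain ⟨s, hs, hys⟩ := Set.mem_sUnion.mp hy
        have : y ∈ ⋃₀ S := ⟨s, hS'S hs, hys⟩
        rw [← hKS] at this; exact this
      · intro y hy
        have := hKS' hy
        simpa [Set.sUnion_eq_biUnion] using this
    exact Set.Countable.mono hsub
      ((Set.countable_setOf_finite_subset hCc).image _)
  obtain ⟨Bs, hBs⟩ := hclopen_ctble.exists_eq_range ⟨∅, isClopen_empty⟩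
  have hBsclopen : ∀ i, IsClopen (Bs i) := by
    intro i
    have : Bs i ∈ {K : Set X | IsClopen K} := by rw [hBs]; exact Set.mem_range_self i
    exact this
  have hBsbasis : ∀ (x : X) (O : Set X), IsOpen O → x ∈ O →
      ∃ i, x ∈ Bs i ∧ Bs i ⊆ O := by
    intro x O hO hxO
    obtain ⟨b, hbB, hxb, hbO⟩ := hB0basis.exists_subset_of_mem_open hxO hO
    have hb : b ∈ {K : Set X | IsClopen K} := hB0clopen b hbB
    rw [hBs] at hb
    obtain ⟨i, rfl⟩ := hb
    exact ⟨i, hxb, hbO⟩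
  -- a decreasing sequence of open sets with intersection `G`, starting at `univ`
  obtain ⟨T, hTopen, hTc, hTG⟩ := hGδ
  obtain ⟨g, hg⟩ := (hTc.insert Set.univ).exists_eq_range (Set.insert_nonempty _ _)
  have hgopen : ∀ k, IsOpen (g k) := by
    intro k
    have : g k ∈ insert Set.univ T := by rw [hg]; exact Set.mem_range_self k
    rcases this with h | h
    · rw [h]; exact isOpen_univ
    · exact hTopen _ h
  set U : ℕ → Set X := fun n => ⋂ k ∈ Finset.range n, g k with hU
  have hUopen : ∀ n, IsOpen (U n) := fun n =>
    isOpen_biInter_finset (fun k _ => hgopen k)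
  have hU0 : U 0 = Set.univ := by simp [hU]
  have hUanti : ∀ {k n : ℕ}, k ≤ n → U n ⊆ U k := by
    intro k n hkn x hx
    simp only [hU, Set.mem_iInter, Finset.mem_range] at hx ⊢
    intro j hj; exact hx j (lt_of_lt_of_le hj hkn)
  have hGU : ∀ x, x ∈ G ↔ ∀ n, x ∈ U n := by
    intro x
    rw [hTG]
    constructor
    · intro hx n
      simp only [hU, Set.mem_iInter, Finset.mem_range]
      intro j _
      have : g j ∈ insert Set.univ T := by rw [hg]; exact Set.mem_range_self j
      rcases this with h | h
      · rw [h]; trivial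
      · exact hx _ h
    · intro hx t ht
      have : t ∈ insert Set.univ T := Set.mem_insert_iff.mpr (Or.inr ht)
      rw [hg] at this
      obtain ⟨j, rfl⟩ := this
      have := hx (j + 1)
      simp only [hU, Set.mem_iInter, Finset.mem_range] at this
      exact this j (Nat.lt_succ_self j)
  -- abbreviations
  set S : X → ℕ → Set X := fun x n => stmt8S Bs x n with hSdef
  set ell : X → ℕ → ℕ := fun x n => stmt8ell Bs U x n with helldef
  set φ0 : X → ℕ → ℕ := fun x n => stmt8phi Bs U x n with hφ0def
  have hSmem : ∀ x n, x ∈ S x n := fun x n i _ => Iff.rfl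
  have hSanti : ∀ (x : X) {m n : ℕ}, m ≤ n → S x n ⊆ S x m :=
    fun x m n h y hy i hi => hy i (lt_of_lt_of_le hi h)
  have hSopen : ∀ x n, IsOpen (S x n) := by
    intro x n
    have : S x n = ⋂ i ∈ Finset.range n, (if x ∈ Bs i then Bs i else (Bs i)ᶜ) := by
      ext y
      simp only [Set.mem_iInter, Finset.mem_range, hSdef, stmt8S, Set.mem_setOf_eq]
      constructor
      · intro h i hi
        by_cases hx : x ∈ Bs i
        · simp only [if_pos hx]; exact (h i hi).mpr hx
        · simp only [if_neg hx]; exact fun hy => hx ((h i hi).mp hy)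
      · intro h i hi
        have := h i hi
        by_cases hx : x ∈ Bs i
        · simp only [if_pos hx] at this; exact ⟨fun _ => hx, fun _ => this⟩
        · simp only [if_neg hx] at this
          exact ⟨fun hy => absurd hy this, fun hx' => absurd hx' hx⟩
    rw [this]
    apply isOpen_biInter_finset
    intro i _
    by_cases hx : x ∈ Bs i
    · simp only [if_pos hx]; exact (hBsclopen i).2
    · simp only [if_neg hx]; exact (hBsclopen i).1.isOpen_compl
  have hSeq : ∀ {x y : X} {n : ℕ}, y ∈ S x n → S y n = S x n := by
    intro x y n hy
    ext z
    simp only [hSdef, stmt8S, Set.mem_setOf_eq] at hy ⊢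
    constructor
    · intro hz i hi; exact (hz i hi).trans (hy i hi)
    · intro hz i hi; exact (hz i hi).trans (hy i hi).symm
  have hellspec : ∀ x n, S x n ⊆ U (ell x n) := by
    intro x n
    show stmt8S Bs x n ⊆ U (stmt8ell Bs U x n)
    exact Nat.findGreatest_spec (P := fun m => stmt8S Bs x n ⊆ U m) (Nat.zero_le n)
      (by show stmt8S Bs x n ⊆ U 0; rw [hU0]; exact Set.subset_univ _)
  have helle : ∀ x n, ell x n ≤ n := by
    intro x n
    show stmt8ell Bs U x n ≤ n
    exact Nat.findGreatest_le (P := fun m => stmt8S Bs x n ⊆ U m) n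
  have hellge : ∀ x n k, k ≤ n → S x n ⊆ U k → k ≤ ell x n := by
    intro x n k hkn hsub
    show k ≤ stmt8ell Bs U x n
    exact Nat.le_findGreatest (P := fun m => stmt8S Bs x n ⊆ U m) hkn hsub
  have hellmono : ∀ x, Monotone (ell x) := by
    intro x
    apply monotone_nat_of_le_succ
    intro n
    exact hellge x (n + 1) (ell x n) ((helle x n).trans (Nat.le_succ n))
      ((hSanti x (Nat.le_succ n)).trans (hellspec x n))
  have helllt : ∀ x k, x ∉ U k → ∀ n, ell x n < k := by
    intro x k hk n
    by_contra h
    push_neg at h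
    exact hk (hUanti h (hellspec x n (hSmem x n)))
  have helltend : ∀ x, x ∈ G → ∀ k, ∃ N, ∀ n, N ≤ n → k ≤ ell x n := by
    intro x hx k
    have hxU : x ∈ U k := (hGU x).mp hx k
    obtain ⟨i, hxi, hiU⟩ := hBsbasis x (U k) (hUopen k) hxU
    refine ⟨max (i + 1) k, fun n hn => ?_⟩
    apply hellge x n k (le_trans (le_max_right _ _) hn)
    intro y hy
    have hiy : y ∈ Bs i := (hy i (lt_of_lt_of_le (Nat.lt_of_lt_of_le (Nat.lt_succ_self i)
      (le_max_left _ _)) hn)).mpr hxi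
    exact hiU hiy
  have hellcongr : ∀ {x y : X} {n : ℕ}, y ∈ S x n → ell y n = ell x n := by
    intro x y n hy
    simp only [helldef, stmt8ell]
    rw [show stmt8S Bs y n = stmt8S Bs x n from hSeq hy]
  have hφcongr : ∀ {x y : X} {n : ℕ}, y ∈ S x n → φ0 y n = φ0 x n := by
    intro x y n hy
    simp only [hφ0def, stmt8phi]
    rw [show stmt8ell Bs U y n = stmt8ell Bs U x n from hellcongr hy]
    congr 1
    congr 1
    apply Finset.filter_congr
    intro i hi
    rw [Finset.mem_range] at hi
    exact hy i (lt_of_lt_of_le hi (helle x n))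
  have hφ_extract : ∀ {x y : X} {n : ℕ}, φ0 x n = φ0 y n →
      ell x n = ell y n ∧ ∀ i < ell x n, (x ∈ Bs i ↔ y ∈ Bs i) := by
    intro x y n h
    simp only [hφ0def, stmt8phi] at h
    obtain ⟨h1, h2⟩ := Nat.pair_eq_pair.mp h
    have h3 := Encodable.encode_injective h2
    refine ⟨h1, fun i hi => ?_⟩
    constructor
    · intro hx
      have : i ∈ (Finset.range (stmt8ell Bs U x n)).filter (fun i => x ∈ Bs i) :=
        Finset.mem_filter.mpr ⟨Finset.mem_range.mpr hi, hx⟩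
      rw [h3] at this
      exact (Finset.mem_filter.mp this).2
    · intro hy
      have : i ∈ (Finset.range (stmt8ell Bs U y n)).filter (fun i => y ∈ Bs i) :=
        Finset.mem_filter.mpr ⟨Finset.mem_range.mpr (h1 ▸ hi), hy⟩
      rw [← h3] at this
      exact (Finset.mem_filter.mp this).2
  -- continuity of the coding map
  have hφ0cont : Continuous φ0 := by
    apply continuous_pi
    intro n
    apply IsLocallyConstant.continuous (f := fun x => φ0 x n)
    rw [IsLocallyConstant.iff_exists_open]
    intro x
    exact ⟨S x n, hSopen x n, hSmem x n, fun y hy => hφcongr hy⟩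
  letI : MetricSpace (ℕ → ℕ) := PiNat.metricSpace
  have hYcomp : IsCompact (Set.range φ0) := isCompact_range hφ0cont
  refine ⟨↥(Set.range φ0), inferInstance, isCompact_iff_compactSpace.mp hYcomp,
    Set.rangeFactorization φ0, ?_, Set.rangeFactorization_surjective, ?_, ?_, ?_⟩
  · exact hφ0cont.subtype_mk _
  · -- embedding on G
    have hemb0 : Topology.IsEmbedding (fun x : G => φ0 ↑x) := by
      have hinj : Function.Injective (fun x : G => φ0 ↑x) := by
        intro a b hab
        have hval : ∀ i : ℕ, ((a : X) ∈ Bs i ↔ (b : X) ∈ Bs i) := by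
          intro i
          obtain ⟨N, hN⟩ := helltend ↑a a.2 (i + 1)
          obtain ⟨h1, h2⟩ := hφ_extract (congrFun hab N)
          exact h2 i (Nat.lt_of_succ_le (hN N le_rfl))
        apply Subtype.ext
        by_contra hne
        obtain ⟨i, hxi, hiO⟩ := hBsbasis ↑a ({(b : X)}ᶜ) isOpen_compl_singleton
          (by simpa using hne)
        exact hiO ((hval i).mp hxi) rfl
      refine ⟨Topology.isInducing_iff_nhds.mpr fun a => le_antisymm ?_ ?_, hinj⟩
      · exact Filter.tendsto_iff_comap.mp
          ((hφ0cont.comp continuous_subtype_val).tendsto a)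
      · rw [nhds_subtype_eq_comap]
        intro t ht
        rw [Filter.mem_comap] at ht ⊢
        obtain ⟨s, hs, hst⟩ := ht
        obtain ⟨O, hOsub, hOopen, hxO⟩ := mem_nhds_iff.mp hs
        obtain ⟨i, hxi, hiO⟩ := hBsbasis ↑a O hOopen hxO
        obtain ⟨N, hN⟩ := helltend ↑a a.2 (i + 1)
        refine ⟨(fun s' : ℕ → ℕ => s' N) ⁻¹' {φ0 ↑a N},
          IsOpen.mem_nhds ((isOpen_discrete _).preimage (continuous_apply N)) rfl, ?_⟩
        · intro b hb
          have hb' : φ0 ↑b N = φ0 ↑a N := hb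
          obtain ⟨h1, h2⟩ := hφ_extract hb'
          have hi : i < ell ↑b N := by rw [h1]; exact Nat.lt_of_succ_le (hN N le_rfl)
          have : (b : X) ∈ Bs i := (h2 i hi).mpr hxi
          exact hst (hOsub (hiO this))
    have hf : Continuous (fun x : G => Set.rangeFactorization φ0 ↑x) :=
      (hφ0cont.subtype_mk _).comp continuous_subtype_val
    exact Topology.IsEmbedding.of_comp hf continuous_subtype_val hemb0
  · -- disjointness
    have hdisj : ∀ {x y : X}, x ∉ G → y ∈ G → φ0 x ≠ φ0 y := by
      intro x y hx hy h
      obtain ⟨k, hk⟩ : ∃ k, x ∉ U k := by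
        by_contra hcon
        push_neg at hcon
        exact hx ((hGU x).mpr hcon)
      obtain ⟨N, hN⟩ := helltend y hy k
      have h1 := (hφ_extract (congrFun h N)).1
      have : k ≤ ell x N := h1 ▸ hN N le_rfl
      exact absurd this (Nat.not_le.mpr (helllt x k hk N))
    rw [Set.eq_empty_iff_forall_notMem]
    rintro z ⟨⟨x, hx, hφx⟩, ⟨y, hy, hφy⟩⟩
    have : φ0 x = φ0 y := by
      have := hφx.trans hφy.symm
      exact congrArg Subtype.val this
    exact hdisj hx hy this
  · -- countable complement
    have hcnt : (φ0 '' Gᶜ).Countable := by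
      have hsub : φ0 '' Gᶜ ⊆ ⋃ N : ℕ, {s : ℕ → ℕ | ∀ m, N ≤ m → s m = s N} := by
        rintro _ ⟨x, hx, rfl⟩
        obtain ⟨k, hk⟩ : ∃ k, x ∉ U k := by
          by_contra hcon
          push_neg at hcon
          exact hx ((hGU x).mpr hcon)
        have hbdd : ∀ n, ell x n < k := helllt x k hk
        have hstab : ∃ N, ∀ m, N ≤ m → ell x m = ell x N := by
          by_contra hcon
          push_neg at hcon
          have grow : ∀ j : ℕ, ∃ n, j ≤ ell x n := by
            intro j
            induction j with
            | zero => exact ⟨0, Nat.zero_le _⟩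
            | succ j ih =>
              obtain ⟨n, hn⟩ := ih
              obtain ⟨m, hm, hne⟩ := hcon n
              have hlt : ell x n < ell x m :=
                lt_of_le_of_ne (hellmono x hm) (fun h => hne h.symm)
              exact ⟨m, Nat.succ_le_of_lt (lt_of_le_of_lt hn hlt)⟩
          obtain ⟨n, hn⟩ := grow k
          exact absurd (hbdd n) (not_lt.mpr hn)
        obtain ⟨N, hNs⟩ := hstab
        refine Set.mem_iUnion.mpr ⟨N, fun m hm => ?_⟩
        show φ0 x m = φ0 x N
        simp only [hφ0def, stmt8phi]
        have : stmt8ell Bs U x m = stmt8ell Bs U x N := hNs m hm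
        rw [this]
      refine Set.Countable.mono hsub (Set.countable_iUnion fun N => ?_)
      have hrange : {s : ℕ → ℕ | ∀ m, N ≤ m → s m = s N} ⊆
          Set.range (fun (v : Fin (N + 1) → ℕ) (m : ℕ) =>
            v ⟨min m N, Nat.lt_succ_of_le (min_le_right m N)⟩) := by
        intro s hs
        refine ⟨fun j => s j, ?_⟩
        funext m
        rcases le_or_gt m N with hmN | hmN
        · simp [min_eq_left hmN]
        · simp only [min_eq_right hmN.le]
          exact (hs m hmN.le).symm
      exact Set.Countable.mono hrange (Set.countable_range _)
    have hsub2 : (Set.rangeFactorization φ0 '' G)ᶜ ⊆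
        Subtype.val ⁻¹' (φ0 '' Gᶜ) := by
      intro y hy
      obtain ⟨x, hxy⟩ := y.2
      by_cases hxG : x ∈ G
      · exfalso
        apply hy
        exact ⟨x, hxG, Subtype.ext hxy⟩
      · exact ⟨x, hxG, hxy⟩
    exact Set.Countable.mono hsub2 (hcnt.preimage Subtype.val_injective)
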